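/- Let W : SL(2) → ℝ be objective and isotropic, and let φ : [0,∞) → ℝ be the unique function with W(F) = φ(λmax(F) − 1/λmax(F)) for all F ∈ SL(2). Then W is polyconvex if and only if φ is nondecreasing and convex on [0,∞). -/
import Mathlib


open Matrix

/-- The largest singular value of a real 2×2 matrix `F`, i.e. the square root of
the largest eigenvalue of `FᵀF`. -/
noncomputable def lambdaMax (F : Matrix (Fin 2) (Fin 2) ℝ) : ℝ :=
  Real.sqrt (((Fᵀ * F).trace + Real.sqrt ((Fᵀ * F).trace ^ 2 - 4 * (Fᵀ * F).det)) / 2)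

/-- Convexity for extended-real-valued functions on `ℝ^{2×2} × ℝ`. -/
def ConvexEReal (P : Matrix (Fin 2) (Fin 2) ℝ × ℝ → EReal) : Prop :=
  ∀ x y : Matrix (Fin 2) (Fin 2) ℝ × ℝ, ∀ a b : ℝ, 0 ≤ a → 0 ≤ b → a + b = 1 →
    P (a • x + b • y) ≤ (a : EReal) * P x + (b : EReal) * P y

/-- Polyconvexity on `SL(2)` in the sense of Mielke: the extension of `W` by
`+∞` outside `SL(2)` is a convex function of `(F, det F)`. -/
def PolyconvexSL (W : Matrix (Fin 2) (Fin 2) ℝ → ℝ) : Prop :=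
  ∃ P : Matrix (Fin 2) (Fin 2) ℝ × ℝ → EReal, ConvexEReal P ∧
    ∀ F : Matrix (Fin 2) (Fin 2) ℝ,
      (if F.det = 1 then (W F : EReal) else ⊤) = P (F, F.det)

noncomputable def nrm (F : Matrix (Fin 2) (Fin 2) ℝ) : ℝ :=
  Real.sqrt ((F 0 0 - F 1 1)^2 + (F 0 1 + F 1 0)^2)

lemma aux_lam (l t s : ℝ) (hlpos : 0 < l) (hlsq : l^2 = (t+s)/2)
    (hssq : s^2 = t^2 - 4) (hsnn : 0 ≤ s) (htge : 2 ≤ t) :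
    l - 1/l = Real.sqrt (t - 2) := by
  have hlge : 1 ≤ l := by nlinarith
  have hne : l ≠ 0 := ne_of_gt hlpos
  have hinv : (1/l)^2 = (t - s)/2 := by
    have h4 : (t+s)*(t-s) = 4 := by nlinarith
    have hts : 0 < t + s := by linarith
    field_simp
    nlinarith
  have hdiff_nn : 0 ≤ l - 1/l := by
    have : 1/l ≤ 1 := by rw [div_le_one hlpos]; exact hlge
    linarith
  have hsq : (l - 1/l)^2 = t - 2 := by
    have hprod : l * (1/l) = 1 := by field_simp
    nlinarith
  rw [← hsq, Real.sqrt_sq hdiff_nn]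

lemma key (F : Matrix (Fin 2) (Fin 2) ℝ) (h : F.det = 1) :
    lambdaMax F - 1 / lambdaMax F = nrm F := by
  unfold nrm
  have hd : F 0 0 * F 1 1 - F 0 1 * F 1 0 = 1 := by
    rw [Matrix.det_fin_two] at h; linarith
  have htr : (Fᵀ * F).trace = F 0 0^2 + F 0 1^2 + F 1 0^2 + F 1 1^2 := by
    simp [Matrix.trace_fin_two, Matrix.mul_apply, Fin.sum_univ_two, Matrix.transpose_apply]
    ring
  have hdet : (Fᵀ * F).det = 1 := by
    rw [Matrix.det_mul, Matrix.det_transpose, h]; ring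
  set t : ℝ := (Fᵀ * F).trace with ht
  have ht2 : t - 2 = (F 0 0 - F 1 1)^2 + (F 0 1 + F 1 0)^2 := by
    rw [htr]; nlinarith
  have htge : 2 ≤ t := by nlinarith [sq_nonneg (F 0 0 - F 1 1), sq_nonneg (F 0 1 + F 1 0)]
  set s : ℝ := Real.sqrt (t^2 - 4*(Fᵀ*F).det) with hs
  have hs' : s = Real.sqrt (t^2 - 4) := by rw [hs, hdet]; ring_nf
  have hsnn : 0 ≤ s := Real.sqrt_nonneg _
  have hssq : s^2 = t^2 - 4 := by
    rw [hs', Real.sq_sqrt]; nlinarith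
  have hpos : (0:ℝ) < (t + s)/2 := by nlinarith
  have hl : lambdaMax F = Real.sqrt ((t + s)/2) := rfl
  have hlsq : (lambdaMax F)^2 = (t + s)/2 := by rw [hl, Real.sq_sqrt hpos.le]
  have hlpos : 0 < lambdaMax F := by rw [hl]; exact Real.sqrt_pos.2 hpos
  rw [← ht2]
  exact aux_lam _ t s hlpos hlsq hssq hsnn htge

lemma sqrt_tri (x1 y1 x2 y2 a b : ℝ) (ha : 0 ≤ a) (hb : 0 ≤ b) :
    Real.sqrt ((a*x1+b*x2)^2 + (a*y1+b*y2)^2)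
      ≤ a * Real.sqrt (x1^2+y1^2) + b * Real.sqrt (x2^2+y2^2) := by
  set n1 := Real.sqrt (x1^2+y1^2) with hn1
  set n2 := Real.sqrt (x2^2+y2^2) with hn2
  have hn1nn : 0 ≤ n1 := Real.sqrt_nonneg _
  have hn2nn : 0 ≤ n2 := Real.sqrt_nonneg _
  have h1 : n1^2 = x1^2+y1^2 := Real.sq_sqrt (by positivity)
  have h2 : n2^2 = x2^2+y2^2 := Real.sq_sqrt (by positivity)
  have hcs : x1*x2 + y1*y2 ≤ n1*n2 := by
    nlinarith [sq_nonneg (x1*y2 - x2*y1), sq_nonneg (n1*n2 - (x1*x2+y1*y2)),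
      sq_nonneg (n1*n2 + (x1*x2+y1*y2)), mul_nonneg hn1nn hn2nn,
      sq_nonneg (n1 - n2), sq_nonneg (n1 + n2)]
  have key : (a*x1+b*x2)^2 + (a*y1+b*y2)^2 ≤ (a*n1+b*n2)^2 := by
    have e1 : a^2*n1^2 = a^2*(x1^2+y1^2) := by rw [h1]
    have e2 : b^2*n2^2 = b^2*(x2^2+y2^2) := by rw [h2]
    nlinarith [mul_le_mul_of_nonneg_left hcs (mul_nonneg ha hb), e1, e2]
  calc Real.sqrt ((a*x1+b*x2)^2 + (a*y1+b*y2)^2)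
      ≤ Real.sqrt ((a*n1+b*n2)^2) := Real.sqrt_le_sqrt key
    _ = a*n1+b*n2 := Real.sqrt_sq (by positivity)

lemma nrm_nonneg (F : Matrix (Fin 2) (Fin 2) ℝ) : 0 ≤ nrm F := Real.sqrt_nonneg _

lemma nrm_comb (X Y : Matrix (Fin 2) (Fin 2) ℝ) (a b : ℝ) (ha : 0 ≤ a) (hb : 0 ≤ b) :
    nrm (a • X + b • Y) ≤ a * nrm X + b * nrm Y := by
  have hent : ∀ i j, (a • X + b • Y) i j = a * X i j + b * Y i j := by
    intro i j; simp [Matrix.add_apply, Matrix.smul_apply, smul_eq_mul]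
  unfold nrm
  rw [hent, hent, hent, hent]
  have := sqrt_tri (X 0 0 - X 1 1) (X 0 1 + X 1 0) (Y 0 0 - Y 1 1) (Y 0 1 + Y 1 0) a b ha hb
  convert this using 3 <;> ring

/-- **Mielke's polyconvexity criterion.** For objective and
isotropic `W : SL(2) → ℝ` with representing function `φ`
(`W(F) = φ(λmax(F) − 1/λmax(F))`), `W` is polyconvex iff `φ` is nondecreasing
and convex on `[0,∞)`. -/
theorem polyconvex_iff_phi_monotone_convex
    (W : Matrix (Fin 2) (Fin 2) ℝ → ℝ)
    (hW : ∀ F : Matrix (Fin 2) (Fin 2) ℝ, F.det = 1 →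
      ∀ Q₁ Q₂ : Matrix (Fin 2) (Fin 2) ℝ, Q₁ᵀ * Q₁ = 1 → Q₂ᵀ * Q₂ = 1 →
        W (Q₁ * F * Q₂) = W F)
    (φ : ℝ → ℝ)
    (hφ : ∀ F : Matrix (Fin 2) (Fin 2) ℝ, F.det = 1 →
      W F = φ (lambdaMax F - 1 / lambdaMax F)) :
    PolyconvexSL W ↔ MonotoneOn φ (Set.Ici 0) ∧ ConvexOn ℝ (Set.Ici 0) φ := by
  constructor
  · rintro ⟨P, hconv, hP⟩
    -- matrices M t = [[1, t],[0,1]]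
    set M : ℝ → Matrix (Fin 2) (Fin 2) ℝ := fun t => !![1, t; 0, 1] with hM
    have hMdet : ∀ t, (M t).det = 1 := by
      intro t; simp [hM, Matrix.det_fin_two_of]
    have hMnrm : ∀ t, nrm (M t) = |t| := by
      intro t
      unfold nrm
      simp [hM, Real.sqrt_sq_eq_abs]
    have hPM : ∀ t : ℝ, P (M t, 1) = ((φ |t| : ℝ) : EReal) := by
      intro t
      have h1 := hP (M t)
      rw [hMdet t, if_pos rfl] at h1
      rw [← h1, hφ _ (hMdet t), key _ (hMdet t), hMnrm]
    have hg : ∀ t₁ t₂ a b : ℝ, 0 ≤ a → 0 ≤ b → a + b = 1 →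
        φ |a*t₁+b*t₂| ≤ a * φ |t₁| + b * φ |t₂| := by
      intro t₁ t₂ a b ha hb hab
      have hsum : a • ((M t₁, (1:ℝ)) : Matrix (Fin 2) (Fin 2) ℝ × ℝ) + b • (M t₂, 1)
          = (M (a*t₁+b*t₂), 1) := by
        refine Prod.ext ?_ ?_
        · show a • M t₁ + b • M t₂ = M (a*t₁+b*t₂)
          ext i j
          fin_cases i <;> fin_cases j <;>
            simp [hM, Matrix.add_apply, Matrix.smul_apply, smul_eq_mul] <;> linarith
        · show a • (1:ℝ) + b • (1:ℝ) = 1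
          simp [smul_eq_mul]; linarith
      have h := hconv (M t₁, 1) (M t₂, 1) a b ha hb hab
      rw [hsum, hPM, hPM, hPM, ← EReal.coe_mul, ← EReal.coe_mul, ← EReal.coe_add,
        EReal.coe_le_coe_iff] at h
      exact h
    constructor
    · -- monotone
      intro s hs t ht hst
      rcases eq_or_lt_of_le (Set.mem_Ici.1 ht) with h0 | h0
      · have : s = 0 := le_antisymm (h0 ▸ hst) hs
        rw [this, ← h0]
      · have ha : 0 ≤ (t - s)/(2*t) := by
          apply div_nonneg <;> linarith
        have hb : 0 ≤ (t + s)/(2*t) := by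
          apply div_nonneg <;> [linarith [Set.mem_Ici.1 hs]; linarith]
        have hab : (t - s)/(2*t) + (t + s)/(2*t) = 1 := by
          field_simp; ring
        have hcomb : (t - s)/(2*t) * (-t) + (t + s)/(2*t) * t = s := by
          field_simp; ring
        have h := hg (-t) t _ _ ha hb hab
        rw [hcomb, abs_neg, abs_of_pos h0, abs_of_nonneg hs] at h
        calc φ s ≤ (t - s)/(2*t) * φ t + (t + s)/(2*t) * φ t := h
          _ = φ t := by field_simp; ring
    · -- convex
      refine ⟨convex_Ici 0, ?_⟩
      intro x hx y hy a b ha hb hab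
      have h := hg x y a b ha hb hab
      rw [abs_of_nonneg (Set.mem_Ici.1 hx), abs_of_nonneg (Set.mem_Ici.1 hy),
        abs_of_nonneg (add_nonneg (mul_nonneg ha (Set.mem_Ici.1 hx))
          (mul_nonneg hb (Set.mem_Ici.1 hy)))] at h
      simpa [smul_eq_mul] using h
  · rintro ⟨hmono, hconvφ⟩
    refine ⟨fun p => if p.2 = 1 then ((φ (nrm p.1) : ℝ) : EReal) else ⊤, ?_, ?_⟩
    · intro x y a b ha hb hab
      dsimp only
      rcases eq_or_lt_of_le ha with ha0 | ha0
      · have hb1 : b = 1 := by linarith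
        subst hb1
        rw [← ha0]
        simp
      rcases eq_or_lt_of_le hb with hb0 | hb0
      · have ha1 : a = 1 := by linarith
        subst ha1
        rw [← hb0]
        simp
      by_cases hx2 : x.2 = 1
      · by_cases hy2 : y.2 = 1
        · have hsnd : (a • x + b • y).2 = 1 := by
            simp [Prod.snd_add, Prod.smul_snd, smul_eq_mul, hx2, hy2, hab]
          simp only [hsnd, if_pos, hx2, hy2]
          have hfst : (a • x + b • y).1 = a • x.1 + b • y.1 := rfl
          rw [hfst, ← EReal.coe_mul, ← EReal.coe_mul, ← EReal.coe_add, EReal.coe_le_coe_iff]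
          have h1 : nrm (a • x.1 + b • y.1) ≤ a * nrm x.1 + b * nrm y.1 :=
            nrm_comb _ _ a b ha hb
          have h2 : φ (nrm (a • x.1 + b • y.1)) ≤ φ (a * nrm x.1 + b * nrm y.1) :=
            hmono (Set.mem_Ici.2 (nrm_nonneg _))
              (Set.mem_Ici.2 (add_nonneg (mul_nonneg ha (nrm_nonneg _))
                (mul_nonneg hb (nrm_nonneg _)))) h1
          have h3 := hconvφ.2 (Set.mem_Ici.2 (nrm_nonneg x.1)) (Set.mem_Ici.2 (nrm_nonneg y.1))
            ha hb hab
          simp only [smul_eq_mul] at h3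
          linarith
        · -- y.2 ≠ 1 : RHS = ⊤
          rw [if_neg hy2]
          rw [EReal.coe_mul_top_of_pos hb0]
          rw [EReal.add_top_of_ne_bot]
          · exact le_top
          · rw [if_pos hx2]
            exact (EReal.coe_mul a _) ▸ EReal.coe_ne_bot _
      · rw [if_neg hx2, EReal.coe_mul_top_of_pos ha0, EReal.top_add_of_ne_bot]
        · exact le_top
        · by_cases hy2 : y.2 = 1
          · rw [if_pos hy2]
            exact (EReal.coe_mul b _) ▸ EReal.coe_ne_bot _
          · rw [if_neg hy2, EReal.coe_mul_top_of_pos hb0]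
            exact top_ne_bot
    · intro F
      by_cases hdF : F.det = 1
      · rw [if_pos hdF]
        dsimp only
        rw [if_pos hdF, hφ F hdF, key F hdF]
      · rw [if_neg hdF]
        dsimp only
        rw [if_neg hdF]
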